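/- Let μ > 0 be a non-integer real number and let p ∈ V_μ. Then W1(p, p*) ≤ (2μ / min{μ−⌊μ⌋, ⌊μ⌋+1−μ}) · (G[p] − G[p*]), where p* is the shifted Bernoulli distribution with mean μ. -/

import Mathlib

/-- Cumulative distribution function of a pmf on ℕ: `F n = ∑_{m ≤ n} p m`. -/
noncomputable def cdf (p : ℕ → ℝ) (n : ℕ) : ℝ := ∑ m ∈ Finset.range (n + 1), p m

/-- Wasserstein-1 distance between two pmfs on ℕ, `W1(p,q) = ∑_{n ≥ 0} |F_n - H_n|`. -/
noncomputable def W1 (p q : ℕ → ℝ) : ℝ := ∑' n : ℕ, |cdf p n - cdf q n|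

/-- Gini index of a pmf on ℕ with mean μ: `G[p] = (1/(2μ)) ∑_i ∑_j |i-j| p_i p_j`. -/
noncomputable def Gini (μ : ℝ) (p : ℕ → ℝ) : ℝ :=
  (1 / (2 * μ)) * ∑' i : ℕ, ∑' j : ℕ, |(i : ℝ) - (j : ℝ)| * p i * p j

/-- The shifted Bernoulli distribution with mean μ:
`p*_{⌊μ⌋} = 1 - μ + ⌊μ⌋`, `p*_{⌊μ⌋+1} = μ - ⌊μ⌋`, `p*_n = 0` otherwise. -/
noncomputable def pstar (μ : ℝ) : ℕ → ℝ := fun n =>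
  if n = ⌊μ⌋₊ then 1 - μ + (⌊μ⌋₊ : ℝ)
  else if n = ⌊μ⌋₊ + 1 then μ - (⌊μ⌋₊ : ℝ)
  else 0

/-- The Dirac distribution on ℕ concentrated at `k`. -/
noncomputable def dirac (k : ℕ) : ℕ → ℝ := fun n => if n = k then 1 else 0

set_option linter.unusedVariables false
set_option linter.unnecessarySeqFocus false

namespace StmtAux


lemma cdf_nonneg {p : ℕ → ℝ} (hpos : ∀ n, 0 ≤ p n) (n : ℕ) : 0 ≤ cdf p n :=
  Finset.sum_nonneg fun i _ => hpos i

lemma cdf_mono {p : ℕ → ℝ} (hpos : ∀ n, 0 ≤ p n) : Monotone (cdf p) := by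
  intro x y hxy
  exact Finset.sum_le_sum_of_subset_of_nonneg (Finset.range_subset_range.2 (by omega))
    (fun i _ _ => hpos i)

lemma cdf_le_one {p : ℕ → ℝ} (hpos : ∀ n, 0 ≤ p n) (hsum : HasSum p 1) (n : ℕ) :
    cdf p n ≤ 1 := sum_le_hasSum _ (fun i _ => hpos i) hsum

lemma hasSum_cut (p : ℕ → ℝ) (n : ℕ) :
    HasSum (fun k => if k ≤ n then p k else 0) (cdf p n) := by
  have hz : ∀ k ∉ Finset.range (n+1), (if k ≤ n then p k else 0) = 0 := by
    intro k hk; rw [Finset.mem_range] at hk; rw [if_neg]; omega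
  have h : HasSum _ _ := hasSum_sum_of_ne_finset_zero hz
  have he : ∑ k ∈ Finset.range (n+1), (if k ≤ n then p k else 0) = cdf p n := by
    apply Finset.sum_congr rfl
    intro k hk; rw [Finset.mem_range] at hk; rw [if_pos]; omega
  rwa [he] at h

lemma hasSum_tail {p : ℕ → ℝ} (hsum : HasSum p 1) (n : ℕ) :
    HasSum (fun k => if n < k then p k else 0) (1 - cdf p n) := by
  have h := hsum.sub (hasSum_cut p n)
  have he : (fun k => p k - (if k ≤ n then p k else 0)) = fun k => if n < k then p k else 0 := by
    funext k
    by_cases hk : k ≤ n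
    · rw [if_pos hk, if_neg (by omega)]; ring
    · rw [if_neg hk, if_pos (by omega)]; ring
  rwa [he] at h

set_option maxHeartbeats 1000000 in
lemma hasSum_one_sub_cdf {p : ℕ → ℝ} {μ : ℝ} (hpos : ∀ n, 0 ≤ p n) (hsum : HasSum p 1)
    (hmean : HasSum (fun n : ℕ => (n : ℝ) * p n) μ) :
    HasSum (fun n => 1 - cdf p n) μ := by
  set f : ℕ × ℕ → ℝ := fun q => if q.2 < q.1 then p q.1 else 0 with hf
  have hrow : ∀ k : ℕ, HasSum (fun n => f (k, n)) ((k : ℝ) * p k) := by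
    intro k
    have hz : ∀ n ∉ Finset.range k, f (k, n) = 0 := by
      intro n hn; rw [Finset.mem_range] at hn; simp only [hf]; rw [if_neg]; omega
    have h : HasSum _ _ := hasSum_sum_of_ne_finset_zero hz
    have he : ∑ n ∈ Finset.range k, f (k, n) = (k : ℝ) * p k := by
      have hc : ∀ n ∈ Finset.range k, f (k, n) = p k := by
        intro n hn
        simp only [hf]
        rw [if_pos (Finset.mem_range.mp hn)]
      rw [Finset.sum_congr rfl hc, Finset.sum_const, Finset.card_range, nsmul_eq_mul]
    rwa [he] at h
  have hfpos : 0 ≤ f := by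
    intro q; simp only [hf]; split
    · exact hpos _
    · exact le_refl 0
  have hSf : Summable f := by
    refine (summable_prod_of_nonneg hfpos).2 ⟨fun k => (hrow k).summable, ?_⟩
    have : (fun k => ∑' n, f (k, n)) = fun k : ℕ => (k : ℝ) * p k :=
      funext fun k => (hrow k).tsum_eq
    rw [this]; exact hmean.summable
  have hftsum : HasSum f μ := by
    have ht : ∑' q, f q = μ := by
      rw [Summable.tsum_prod' hSf (fun k => (hrow k).summable)]
      have h2 : ∑' (k : ℕ) (n : ℕ), f (k, n) = ∑' k : ℕ, (k : ℝ) * p k :=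
        tsum_congr fun k => (hrow k).tsum_eq
      rw [h2]
      exact hmean.tsum_eq
    exact ht ▸ hSf.hasSum
  have hswap : HasSum (fun q : ℕ × ℕ => f (q.2, q.1)) μ :=
    ((Equiv.prodComm ℕ ℕ).hasSum_iff).2 hftsum
  refine hswap.prod_fiberwise (fun n => ?_)
  exact hasSum_tail hsum n

lemma sum_ind (i N : ℕ) :
    ∑ n ∈ Finset.range N, (if i ≤ n then (1:ℝ) else 0) = ((N - i : ℕ) : ℝ) := by
  induction N with
  | zero => simp
  | succ N ih =>
    rw [Finset.sum_range_succ, ih]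
    by_cases h : i ≤ N
    · rw [if_pos h, Nat.cast_sub h, Nat.cast_sub (by omega)]
      push_cast; ring
    · rw [if_neg h, Nat.sub_eq_zero_of_le (by omega), Nat.sub_eq_zero_of_le (by omega)]
      simp

lemma e_eq (i j n : ℕ) : |(if i ≤ n then (1:ℝ) else 0) - (if j ≤ n then 1 else 0)|
    = (if min i j ≤ n then (1:ℝ) else 0) - (if max i j ≤ n then 1 else 0) := by
  rcases le_total i j with h | h
  · rw [min_eq_left h, max_eq_right h]
    by_cases h1 : i ≤ n <;> by_cases h2 : j ≤ n <;>
      simp [h1, h2, abs_of_nonneg, abs_of_nonpos] <;> omega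
  · rw [min_eq_right h, max_eq_left h]
    by_cases h1 : i ≤ n <;> by_cases h2 : j ≤ n <;>
      simp [h1, h2, abs_of_nonneg, abs_of_nonpos] <;> omega

lemma hasSum_e (i j : ℕ) :
    HasSum (fun n => |(if i ≤ n then (1:ℝ) else 0) - (if j ≤ n then 1 else 0)|)
      |(i : ℝ) - (j : ℝ)| := by
  have hz : ∀ n ∉ Finset.range (max i j),
      |(if i ≤ n then (1:ℝ) else 0) - (if j ≤ n then 1 else 0)| = 0 := by
    intro n hn; rw [Finset.mem_range] at hn
    rw [if_pos (by omega), if_pos (by omega)]; simp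
  have h : HasSum _ _ := hasSum_sum_of_ne_finset_zero hz
  have he : ∑ n ∈ Finset.range (max i j),
      |(if i ≤ n then (1:ℝ) else 0) - (if j ≤ n then 1 else 0)| = |(i : ℝ) - (j : ℝ)| := by
    have hc := fun n (_ : n ∈ Finset.range (max i j)) => e_eq i j n
    rw [Finset.sum_congr rfl hc, Finset.sum_sub_distrib, sum_ind, sum_ind,
      Nat.sub_self, Nat.cast_zero, sub_zero]
    rcases le_total i j with h | h
    · rw [min_eq_left h, max_eq_right h, Nat.cast_sub h, abs_of_nonpos (by
        simp [sub_nonpos]; exact_mod_cast h), neg_sub]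
    · rw [min_eq_right h, max_eq_left h, Nat.cast_sub h, abs_of_nonneg (by
        simp [sub_nonneg]; exact_mod_cast h)]
  rwa [he] at h


set_option maxHeartbeats 1000000 in
/-- Key identity: the Gini double sum equals `2 ∑ F (1 - F)`. -/
lemma gini_hasSum {p : ℕ → ℝ} {μ : ℝ} (hpos : ∀ n, 0 ≤ p n) (hsum : HasSum p 1)
    (hmean : HasSum (fun n : ℕ => (n : ℝ) * p n) μ) :
    HasSum (fun n => 2 * (cdf p n * (1 - cdf p n)))
      (∑' i : ℕ, ∑' j : ℕ, |(i : ℝ) - (j : ℝ)| * p i * p j) := by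
  classical
  set e : ℕ → ℕ → ℝ := fun i n => if i ≤ n then (1:ℝ) else 0 with he
  have hepos : ∀ i n, 0 ≤ e i n := by intro i n; simp only [he]; split <;> norm_num
  -- summability of the double sum
  have hTnn : ∀ z : ℕ × ℕ, 0 ≤ |(z.1 : ℝ) - (z.2 : ℝ)| * p z.1 * p z.2 := fun z =>
    mul_nonneg (mul_nonneg (abs_nonneg _) (hpos _)) (hpos _)
  have hs1 : Summable (fun z : ℕ × ℕ => ((z.1 : ℝ) * p z.1) * p z.2) :=
    hmean.summable.mul_of_nonneg hsum.summable
      (fun i => mul_nonneg (Nat.cast_nonneg i) (hpos i)) hpos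
  have hs2 : Summable (fun z : ℕ × ℕ => p z.1 * ((z.2 : ℝ) * p z.2)) :=
    hsum.summable.mul_of_nonneg hmean.summable hpos
      (fun j => mul_nonneg (Nat.cast_nonneg j) (hpos j))
  have hT : Summable (fun z : ℕ × ℕ => |(z.1 : ℝ) - (z.2 : ℝ)| * p z.1 * p z.2) := by
    refine Summable.of_nonneg_of_le hTnn (fun z => ?_) (hs1.add hs2)
    have h1 : |(z.1 : ℝ) - (z.2 : ℝ)| ≤ (z.1 : ℝ) + (z.2 : ℝ) := by
      refine (abs_sub _ _).trans ?_
      rw [abs_of_nonneg (Nat.cast_nonneg _), abs_of_nonneg (Nat.cast_nonneg _)]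
    have h2 : (0:ℝ) ≤ p z.1 * p z.2 := mul_nonneg (hpos _) (hpos _)
    calc |(z.1 : ℝ) - (z.2 : ℝ)| * p z.1 * p z.2
        = |(z.1 : ℝ) - (z.2 : ℝ)| * (p z.1 * p z.2) := by ring
      _ ≤ ((z.1 : ℝ) + (z.2 : ℝ)) * (p z.1 * p z.2) := by
          exact mul_le_mul_of_nonneg_right h1 h2
      _ = ((z.1 : ℝ) * p z.1) * p z.2 + p z.1 * ((z.2 : ℝ) * p z.2) := by ring
  -- the triple function
  set U : (ℕ × ℕ) × ℕ → ℝ := fun q => |e q.1.1 q.2 - e q.1.2 q.2| * p q.1.1 * p q.1.2 with hU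
  have hUnn : 0 ≤ U := by
    intro q
    exact mul_nonneg (mul_nonneg (abs_nonneg _) (hpos _)) (hpos _)
  have hUrow : ∀ z : ℕ × ℕ, HasSum (fun n => U (z, n))
      (|(z.1 : ℝ) - (z.2 : ℝ)| * p z.1 * p z.2) := by
    intro z
    have h := (hasSum_e z.1 z.2).mul_right (p z.1 * p z.2)
    have hfe : (fun n => |e z.1 n - e z.2 n| * (p z.1 * p z.2)) = fun n => U (z, n) := by
      funext n; simp only [hU, he]; ring
    rw [← mul_assoc] at h
    rwa [hfe] at h
  have hSU : Summable U := by
    refine (summable_prod_of_nonneg hUnn).2 ⟨fun z => (hUrow z).summable, ?_⟩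
    have : (fun z : ℕ × ℕ => ∑' n, U (z, n))
        = fun z : ℕ × ℕ => |(z.1 : ℝ) - (z.2 : ℝ)| * p z.1 * p z.2 :=
      funext fun z => (hUrow z).tsum_eq
    rw [this]; exact hT
  have hUsum : HasSum U (∑' i : ℕ, ∑' j : ℕ, |(i : ℝ) - (j : ℝ)| * p i * p j) := by
    have ht : ∑' q, U q = ∑' i : ℕ, ∑' j : ℕ, |(i : ℝ) - (j : ℝ)| * p i * p j := by
      rw [Summable.tsum_prod' hSU (fun z => (hUrow z).summable)]
      have h2 : ∑' (z : ℕ × ℕ) (n : ℕ), U (z, n)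
          = ∑' z : ℕ × ℕ, |(z.1 : ℝ) - (z.2 : ℝ)| * p z.1 * p z.2 :=
        tsum_congr fun z => (hUrow z).tsum_eq
      rw [h2, Summable.tsum_prod' hT (fun i => ?_)]
      · exact ((summable_prod_of_nonneg hTnn).1 hT).1 i
    exact ht ▸ hSU.hasSum
  have hswap : HasSum (U ∘ (Equiv.prodComm ℕ (ℕ × ℕ)))
      (∑' i : ℕ, ∑' j : ℕ, |(i : ℝ) - (j : ℝ)| * p i * p j) :=
    ((Equiv.prodComm ℕ (ℕ × ℕ)).hasSum_iff).2 hUsum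
  refine hswap.prod_fiberwise (fun n => ?_)
  -- fiber over n : sum over (i,j) of |e i n - e j n| p i p j = 2 F (1-F)
  have hcut : HasSum (fun i => e i n * p i) (cdf p n) := by
    have h := hasSum_cut p n
    have : (fun i => e i n * p i) = fun k => if k ≤ n then p k else 0 := by
      funext k; simp only [he]; split <;> simp
    rwa [this]
  have hcnn : ∀ i, 0 ≤ e i n * p i := fun i => mul_nonneg (hepos i n) (hpos i)
  have h1 : HasSum (fun z : ℕ × ℕ => (e z.1 n * p z.1) * p z.2) (cdf p n * 1) :=
    hcut.mul hsum (hcut.summable.mul_of_nonneg hsum.summable hcnn hpos)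
  have h2 : HasSum (fun z : ℕ × ℕ => p z.1 * (e z.2 n * p z.2)) (1 * cdf p n) :=
    hsum.mul hcut (hsum.summable.mul_of_nonneg hcut.summable hpos hcnn)
  have h3 : HasSum (fun z : ℕ × ℕ => (e z.1 n * p z.1) * (e z.2 n * p z.2))
      (cdf p n * cdf p n) :=
    hcut.mul hcut (hcut.summable.mul_of_nonneg hcut.summable hcnn hcnn)
  have hcomb := (h1.add h2).sub (h3.mul_left 2)
  have hfe : (fun z : ℕ × ℕ => (e z.1 n * p z.1) * p z.2 + p z.1 * (e z.2 n * p z.2)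
      - 2 * ((e z.1 n * p z.1) * (e z.2 n * p z.2)))
      = fun z : ℕ × ℕ => U (z, n) := by
    funext z
    have hee : |e z.1 n - e z.2 n| = e z.1 n + e z.2 n - 2 * (e z.1 n * e z.2 n) := by
      simp only [he]
      split <;> split <;> norm_num
    simp only [hU, hee]; ring
  rw [hfe] at hcomb
  have hval : cdf p n * 1 + 1 * cdf p n - 2 * (cdf p n * cdf p n)
      = 2 * (cdf p n * (1 - cdf p n)) := by ring
  rw [hval] at hcomb
  exact hcomb


lemma pstar_zero {μ : ℝ} {n : ℕ} (h1 : n ≠ ⌊μ⌋₊) (h2 : n ≠ ⌊μ⌋₊ + 1) : pstar μ n = 0 := by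
  unfold pstar; rw [if_neg h1, if_neg h2]

lemma cdf_pstar (μ : ℝ) (n : ℕ) :
    cdf (pstar μ) n = if n < ⌊μ⌋₊ then 0 else if n = ⌊μ⌋₊ then 1 - (μ - (⌊μ⌋₊:ℝ)) else 1 := by
  set m := ⌊μ⌋₊ with hm
  unfold cdf
  rcases lt_trichotomy n m with h | h | h
  · rw [if_pos h]
    apply Finset.sum_eq_zero
    intro k hk; rw [Finset.mem_range] at hk
    exact pstar_zero (by omega) (by omega)
  · rw [if_neg (by omega), if_pos h, Finset.sum_range_succ]
    have h0 : ∑ k ∈ Finset.range n, pstar μ k = 0 := by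
      apply Finset.sum_eq_zero
      intro k hk; rw [Finset.mem_range] at hk
      exact pstar_zero (by omega) (by omega)
    rw [h0, zero_add]
    unfold pstar
    rw [if_pos (by omega : n = ⌊μ⌋₊)]; ring
  · rw [if_neg (by omega), if_neg (by omega)]
    have hsub : Finset.range (m + 2) ⊆ Finset.range (n + 1) := Finset.range_subset_range.2 (by omega)
    rw [← Finset.sum_subset hsub (by
      intro k _ hk2; rw [Finset.mem_range] at hk2
      exact pstar_zero (by omega) (by omega))]
    rw [Finset.sum_range_succ, Finset.sum_range_succ]
    have h0 : ∑ k ∈ Finset.range m, pstar μ k = 0 := by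
      apply Finset.sum_eq_zero
      intro k hk; rw [Finset.mem_range] at hk
      exact pstar_zero (by omega) (by omega)
    rw [h0, zero_add]
    unfold pstar
    rw [if_pos rfl, if_neg (by omega), if_pos rfl]; ring

lemma pstar_nonneg {μ : ℝ} (hμ : 0 < μ) (n : ℕ) : 0 ≤ pstar μ n := by
  have h1 : (⌊μ⌋₊ : ℝ) ≤ μ := Nat.floor_le hμ.le
  have h2 : μ < (⌊μ⌋₊ : ℝ) + 1 := Nat.lt_floor_add_one μ
  unfold pstar
  split
  · linarith
  · split
    · linarith
    · exact le_refl 0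

lemma pstar_hasSum {μ : ℝ} : HasSum (pstar μ) 1 := by
  have hz : ∀ k ∉ Finset.range (⌊μ⌋₊ + 2), pstar μ k = 0 := by
    intro k hk; rw [Finset.mem_range] at hk
    exact pstar_zero (by omega) (by omega)
  have h : HasSum _ _ := hasSum_sum_of_ne_finset_zero hz
  have he : ∑ k ∈ Finset.range (⌊μ⌋₊ + 2), pstar μ k = 1 := by
    rw [Finset.sum_range_succ, Finset.sum_range_succ]
    rw [Finset.sum_eq_zero (fun k hk => pstar_zero (by
        rw [Finset.mem_range] at hk; omega) (by rw [Finset.mem_range] at hk; omega))]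
    unfold pstar
    rw [if_pos rfl, if_neg (by omega), if_pos rfl]; ring
  rwa [he] at h

lemma pstar_mean {μ : ℝ} (hμ : 0 < μ) :
    HasSum (fun n : ℕ => (n : ℝ) * pstar μ n) μ := by
  have hz : ∀ k ∉ Finset.range (⌊μ⌋₊ + 2), (k : ℝ) * pstar μ k = 0 := by
    intro k hk; rw [Finset.mem_range] at hk
    rw [pstar_zero (by omega) (by omega), mul_zero]
  have h : HasSum _ _ := hasSum_sum_of_ne_finset_zero hz
  have he : ∑ k ∈ Finset.range (⌊μ⌋₊ + 2), (k : ℝ) * pstar μ k = μ := by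
    rw [Finset.sum_range_succ, Finset.sum_range_succ]
    rw [Finset.sum_eq_zero (fun k hk => by
      rw [pstar_zero (by rw [Finset.mem_range] at hk; omega)
        (by rw [Finset.mem_range] at hk; omega), mul_zero])]
    unfold pstar
    rw [if_pos rfl, if_neg (by omega), if_pos rfl]
    push_cast; ring
  rwa [he] at h


end StmtAux

open StmtAux in
set_option maxHeartbeats 2000000 in
theorem stmt_1 (μ : ℝ) (hμ : 0 < μ) (hni : ∀ n : ℕ, μ ≠ (n : ℝ)) (p : ℕ → ℝ)
    (hpos : ∀ n, 0 ≤ p n) (hsum : HasSum p 1)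
    (hmean : HasSum (fun n : ℕ => (n : ℝ) * p n) μ) :
    W1 p (pstar μ) ≤
      (2 * μ / min (μ - (⌊μ⌋₊ : ℝ)) ((⌊μ⌋₊ : ℝ) + 1 - μ)) *
        (Gini μ p - Gini μ (pstar μ)) := by
  classical
  have hmle : ((⌊μ⌋₊ : ℕ) : ℝ) ≤ μ := Nat.floor_le hμ.le
  have hmlt : μ < ((⌊μ⌋₊ : ℕ) : ℝ) + 1 := Nat.lt_floor_add_one μ
  set M := ⌊μ⌋₊ with hM
  set θ : ℝ := μ - (M : ℝ) with hθdef
  have hθ0 : 0 < θ := sub_pos.2 (lt_of_le_of_ne hmle (fun h => hni M h.symm))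
  have hθ1 : θ < 1 := by rw [hθdef]; linarith
  set δ : ℝ := min (μ - (M : ℝ)) ((M : ℝ) + 1 - μ) with hδdef
  have hδθ : δ ≤ θ := min_le_left _ _
  have hδ1θ : δ ≤ 1 - θ := by
    have := min_le_right (μ - (M : ℝ)) ((M : ℝ) + 1 - μ); rw [hθdef]; linarith
  have hδ0 : 0 < δ := lt_min (by linarith) (by linarith)
  set F := cdf p with hF
  set Fs := cdf (pstar μ) with hFs
  have hFsval : ∀ n, Fs n = if n < M then 0 else if n = M then 1 - θ else 1 := by
    intro n; rw [hFs, cdf_pstar, hθdef, hM]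
  have hFsLT : ∀ n, n < M → Fs n = 0 := fun n hn => by rw [hFsval, if_pos hn]
  have hFsM : Fs M = 1 - θ := by rw [hFsval, if_neg (by omega), if_pos rfl]
  have hFsGT : ∀ n, M < n → Fs n = 1 := fun n hn => by
    rw [hFsval, if_neg (by omega), if_neg (by omega)]
  have hF0 : ∀ n, 0 ≤ F n := cdf_nonneg hpos
  have hF1 : ∀ n, F n ≤ 1 := cdf_le_one hpos hsum
  have hFmono : Monotone F := cdf_mono hpos
  have hspos := pstar_nonneg hμ
  have hssum : HasSum (pstar μ) 1 := pstar_hasSum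
  have hsmean : HasSum (fun n : ℕ => (n : ℝ) * pstar μ n) μ := pstar_mean hμ
  have hFs0 : ∀ n, 0 ≤ Fs n := cdf_nonneg hspos
  have hFs1 : ∀ n, Fs n ≤ 1 := cdf_le_one hspos hssum
  have htailp : HasSum (fun n => 1 - F n) μ := hasSum_one_sub_cdf hpos hsum hmean
  have htails : HasSum (fun n => 1 - Fs n) μ := hasSum_one_sub_cdf hspos hssum hsmean
  set a : ℕ → ℝ := fun n => F n - Fs n with hadef
  have ha : HasSum a 0 := by
    have h := htails.sub htailp
    have he : (fun n => (1 - Fs n) - (1 - F n)) = a := by funext n; rw [hadef]; ring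
    rw [he, sub_self] at h; exact h
  have habs : Summable (fun n => |a n|) := by
    refine Summable.of_nonneg_of_le (fun n => abs_nonneg _) (fun n => ?_)
      (htails.summable.add htailp.summable)
    have h1 := hF1 n; have h2 := hFs1 n; have h3 := hF0 n; have h4 := hFs0 n
    rw [hadef, abs_le]
    constructor <;> simp only <;> linarith
  have hasum : Summable a := habs.of_abs
  -- Gini sums
  have hGp := gini_hasSum hpos hsum hmean
  have hGs := gini_hasSum hspos hssum hsmean
  have hSp : HasSum (fun n => F n * (1 - F n))
      (2⁻¹ * ∑' i : ℕ, ∑' j : ℕ, |(i : ℝ) - (j : ℝ)| * p i * p j) := by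
    have h := hGp.mul_left 2⁻¹
    have he : (fun n => 2⁻¹ * (2 * (cdf p n * (1 - cdf p n)))) = fun n => F n * (1 - F n) := by
      funext n; rw [hF]; ring
    rwa [he] at h
  have hSsval : HasSum (fun n => Fs n * (1 - Fs n)) ((1 - θ) * θ) := by
    have hz : ∀ n ∉ Finset.range (M + 1), Fs n * (1 - Fs n) = 0 := by
      intro n hn; rw [Finset.mem_range] at hn
      rw [hFsGT n (by omega)]; ring
    have h : HasSum _ _ := hasSum_sum_of_ne_finset_zero hz
    have he : ∑ n ∈ Finset.range (M + 1), Fs n * (1 - Fs n) = (1 - θ) * θ := by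
      rw [Finset.sum_range_succ, Finset.sum_eq_zero (fun n hn => by
        rw [Finset.mem_range] at hn; rw [hFsLT n hn]; ring), zero_add, hFsM]
      ring
    rwa [he] at h
  have hSs : HasSum (fun n => 2 * (cdf (pstar μ) n * (1 - cdf (pstar μ) n)))
      (2 * ((1 - θ) * θ)) := by
    have h := hSsval.mul_left 2
    have he : (fun n => 2 * (Fs n * (1 - Fs n)))
        = fun n => 2 * (cdf (pstar μ) n * (1 - cdf (pstar μ) n)) := by
      funext n; rw [hFs]
    rwa [he] at h
  have hDs : (∑' i : ℕ, ∑' j : ℕ, |(i : ℝ) - (j : ℝ)| * pstar μ i * pstar μ j)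
      = 2 * ((1 - θ) * θ) := hGs.unique hSs
  -- the decomposition
  set c : ℝ := a M with hcdef
  set A : ℝ := ∑ n ∈ Finset.range M, a n with hAdef
  set B : ℝ := ∑' k : ℕ, (1 - F (k + (M + 1))) with hBdef
  have haFn : ∀ n, n < M → a n = F n := by
    intro n hn; rw [hadef]; simp only; rw [hFsLT n hn, sub_zero]
  have hAnn : 0 ≤ A := Finset.sum_nonneg (fun n hn => by
    rw [haFn n (Finset.mem_range.mp hn)]; exact hF0 n)
  have hFMc : F M = 1 - θ + c := by rw [hcdef, hadef]; simp only; rw [hFsM]; ring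
  have htail2 : Summable (fun k => 1 - F (k + (M + 1))) := by
    have h : Summable ((fun n => 1 - F n) ∘ (fun k : ℕ => k + (M + 1))) :=
      htailp.summable.comp_injective (add_left_injective (M + 1))
    exact h
  have hBnn : 0 ≤ B := tsum_nonneg (fun k => by linarith [hF1 (k + (M + 1))])
  have haGT : ∀ k : ℕ, a (k + (M + 1)) = -(1 - F (k + (M + 1))) := by
    intro k; rw [hadef]; simp only; rw [hFsGT _ (by omega)]; ring
  have hB : B = A + c := by
    have hsplit := Summable.sum_add_tsum_nat_add (f := a) (M + 1) hasum
    rw [ha.tsum_eq, Finset.sum_range_succ] at hsplit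
    have he : ∑' k : ℕ, a (k + (M + 1)) = -B := by
      rw [hBdef, ← tsum_neg]
      exact tsum_congr haGT
    rw [he] at hsplit
    rw [← hAdef, ← hcdef] at hsplit
    linarith
  -- sum of squares
  have haabs1 : ∀ n, |a n| ≤ 1 := by
    intro n
    have h1 := hF1 n; have h2 := hFs1 n; have h3 := hF0 n; have h4 := hFs0 n
    rw [hadef, abs_le]; constructor <;> simp only <;> linarith
  have hψ : Summable (fun n => a n ^ 2) := by
    refine Summable.of_nonneg_of_le (fun n => sq_nonneg _) (fun n => ?_) habs
    calc a n ^ 2 = |a n| * |a n| := by rw [← abs_mul, sq, abs_mul_self]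
    _ ≤ 1 * |a n| := mul_le_mul_of_nonneg_right (haabs1 n) (abs_nonneg _)
    _ = |a n| := one_mul _
  set Q : ℝ := ∑' n, a n ^ 2 with hQdef
  have hφ : HasSum (fun n => a n * (2 - 2 * Fs n)) (2 * A + 2 * θ * c) := by
    have hz : ∀ n ∉ Finset.range (M + 1), a n * (2 - 2 * Fs n) = 0 := by
      intro n hn; rw [Finset.mem_range] at hn
      rw [hFsGT n (by omega)]; ring
    have h : HasSum _ _ := hasSum_sum_of_ne_finset_zero hz
    have he : ∑ n ∈ Finset.range (M + 1), a n * (2 - 2 * Fs n) = 2 * A + 2 * θ * c := by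
      rw [Finset.sum_range_succ, hFsM, ← hcdef]
      have h2 : ∀ n ∈ Finset.range M, a n * (2 - 2 * Fs n) = 2 * a n := by
        intro n hn; rw [hFsLT n (Finset.mem_range.mp hn)]; ring
      rw [Finset.sum_congr rfl h2, ← Finset.mul_sum, ← hAdef]
      ring
    rwa [he] at h
  have hg : HasSum (fun n => F n * (1 - F n) - Fs n * (1 - Fs n))
      (2 * A + 2 * θ * c - Q - 0) := by
    have h := (hφ.sub hψ.hasSum).sub ha
    have he : (fun n => a n * (2 - 2 * Fs n) - a n ^ 2 - a n)
        = fun n => F n * (1 - F n) - Fs n * (1 - Fs n) := by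
      funext n; rw [hadef]; ring
    rw [← hQdef] at h
    rwa [he] at h
  have hg' : HasSum (fun n => F n * (1 - F n) - Fs n * (1 - Fs n))
      ((2⁻¹ * ∑' i : ℕ, ∑' j : ℕ, |(i : ℝ) - (j : ℝ)| * p i * p j) - (1 - θ) * θ) :=
    hSp.sub hSsval
  have hDp : (2⁻¹ * ∑' i : ℕ, ∑' j : ℕ, |(i : ℝ) - (j : ℝ)| * p i * p j) - (1 - θ) * θ
      = 2 * A + 2 * θ * c - Q - 0 := hg'.unique hg
  -- bound on Q
  have hQle : Q ≤ F M * A + c ^ 2 + (1 - F M) * B := by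
    have hsplit := (Summable.sum_add_tsum_nat_add (f := fun n => a n ^ 2) (M + 1) hψ).symm
    rw [← hQdef] at hsplit
    have h1 : ∑ n ∈ Finset.range (M + 1), a n ^ 2 ≤ F M * A + c ^ 2 := by
      rw [Finset.sum_range_succ, ← hcdef]
      have h2 : ∑ n ∈ Finset.range M, a n ^ 2 ≤ F M * A := by
        rw [hAdef, Finset.mul_sum]
        refine Finset.sum_le_sum (fun n hn => ?_)
        rw [Finset.mem_range] at hn
        have h3 : a n ≤ F M := by
          rw [haFn n hn]; exact hFmono (by omega)
        have h4 : 0 ≤ a n := by rw [haFn n hn]; exact hF0 n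
        calc a n ^ 2 = a n * a n := sq (a n) ▸ rfl
        _ ≤ F M * a n := mul_le_mul_of_nonneg_right h3 h4
      linarith
    have h5 : ∑' k : ℕ, a (k + (M + 1)) ^ 2 ≤ (1 - F M) * B := by
      rw [hBdef, ← tsum_mul_left]
      have hψ2 : Summable ((fun n => a n ^ 2) ∘ (fun k : ℕ => k + (M + 1))) :=
        hψ.comp_injective (add_left_injective (M + 1))
      refine Summable.tsum_le_tsum (fun k => ?_) hψ2 (htail2.mul_left _)
      rw [haGT k, neg_pow]
      have h6 : 0 ≤ 1 - F (k + (M + 1)) := by linarith [hF1 (k + (M + 1))]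
      have h7 : 1 - F (k + (M + 1)) ≤ 1 - F M := by
        have := hFmono (by omega : M ≤ k + (M + 1)); linarith
      calc (-1 : ℝ) ^ 2 * (1 - F (k + (M + 1))) ^ 2
          = (1 - F (k + (M + 1))) * (1 - F (k + (M + 1))) := by ring
      _ ≤ (1 - F M) * (1 - F (k + (M + 1))) := mul_le_mul_of_nonneg_right h7 h6
    rw [hsplit]
    linarith
  -- W1 value
  have hW : W1 p (pstar μ) = A + |c| + B := by
    have h0 : W1 p (pstar μ) = ∑' n, |a n| := rfl
    rw [h0, ← Summable.sum_add_tsum_nat_add (M + 1) habs, Finset.sum_range_succ, ← hcdef]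
    have h1 : ∑ n ∈ Finset.range M, |a n| = A := by
      rw [hAdef]
      exact Finset.sum_congr rfl (fun n hn => abs_of_nonneg (by
        rw [haFn n (Finset.mem_range.mp hn)]; exact hF0 n))
    have h2 : ∑' k : ℕ, |a (k + (M + 1))| = B := by
      rw [hBdef]
      refine tsum_congr (fun k => ?_)
      rw [haGT k, abs_neg, abs_of_nonneg (by linarith [hF1 (k + (M + 1))])]
    rw [h1, h2]
  -- final arithmetic
  have hGini : Gini μ p - Gini μ (pstar μ) = (1 / (2 * μ)) * (2 * (2 * A + 2 * θ * c - Q)) := by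
    unfold Gini
    rw [hDs, ← mul_sub]
    congr 1
    have : (∑' i : ℕ, ∑' j : ℕ, |(i : ℝ) - (j : ℝ)| * p i * p j)
        = 2 * (2 * A + 2 * θ * c - Q + (1 - θ) * θ) := by
      have := hDp
      field_simp at this ⊢
      linarith
    rw [this]; ring
  rw [hW, hGini]
  have hμne : μ ≠ 0 := ne_of_gt hμ
  have hrhs : (2 * μ / δ) * ((1 / (2 * μ)) * (2 * (2 * A + 2 * θ * c - Q)))
      = (2 * (2 * A + 2 * θ * c - Q)) / δ := by
    field_simp
  rw [hrhs, le_div_iff₀ hδ0]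
  have hkey : 2 * A + 2 * θ * c - Q ≥ A + θ * c := by
    have h1 : F M * A + c ^ 2 + (1 - F M) * B = (1 - θ + c) * A + c ^ 2 + (θ - c) * (A + c) := by
      rw [hFMc, hB]; ring
    nlinarith [hQle]
  rcases abs_cases c with ⟨hc1, hc2⟩ | ⟨hc1, hc2⟩
  · rw [hc1, hB]
    have e1 : 0 ≤ (1 - δ) * A := mul_nonneg (by linarith) hAnn
    have e2 : 0 ≤ (θ - δ) * c := mul_nonneg (by linarith) hc2
    nlinarith
  · rw [hc1, hB]
    have hAc : 0 ≤ A + c := by rw [← hB]; exact hBnn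
    have e1 : 0 ≤ (1 - δ - θ) * A := mul_nonneg (by linarith) hAnn
    have e2 : 0 ≤ θ * (A + c) := mul_nonneg hθ0.le hAc
    nlinarith
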